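/- Let c ≥ 1 be a real number and n a nonnegative integer. For the monic Jacobi polynomial p_n^{(α,β)}(x) = (2^n (α+1)_n / (n+α+β+1)_n) · Σ_{l=0}^n [(n+α+β+1)_l / (α+1)_l] · C(n,l) · ((x−1)/2)^l, one has, for every fixed x ∈ [−1,1], the limit lim p_n^{(α,β)}(x) = (x + (c−1)/(c+1))^n as α → ∞ with α/β → c. -/

import Mathlib

open Filter

/-- The monic Jacobi polynomial `p_n^{(α,β)}(x)` in explicit form. -/
noncomputable def monicJacobi (n : ℕ) (α β x : ℝ) : ℝ :=
  (2 ^ n * (ascPochhammer ℝ n).eval (α + 1) / (ascPochhammer ℝ n).eval (n + α + β + 1)) *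
    ∑ l ∈ Finset.range (n + 1),
      ((ascPochhammer ℝ l).eval (n + α + β + 1) / (ascPochhammer ℝ l).eval (α + 1)) *
        (n.choose l : ℝ) * ((x - 1) / 2) ^ l

lemma ascPochhammer_eval_prod (l : ℕ) (t : ℝ) :
    (ascPochhammer ℝ l).eval t = ∏ i ∈ Finset.range l, (t + i) := by
  induction l with
  | zero => simp
  | succ m ih => rw [ascPochhammer_succ_eval, ih, Finset.prod_range_succ]

/-- Limit of monic Jacobi polynomials as `α → ∞`, `α/β → c` with `c ≥ 1`. -/
theorem monicJacobi_limit (c : ℝ) (hc : 1 ≤ c) (n : ℕ) (x : ℝ) (hx : x ∈ Set.Icc (-1 : ℝ) 1) :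
    Tendsto (fun p : ℝ × ℝ => monicJacobi n p.1 p.2 x)
      (𝓟 {p : ℝ × ℝ | 0 < p.1 ∧ 0 < p.2} ⊓ comap Prod.fst atTop ⊓
        comap (fun p : ℝ × ℝ => p.1 / p.2) (nhds c))
      (nhds ((x + (c - 1) / (c + 1)) ^ n)) := by
  set L := 𝓟 {p : ℝ × ℝ | 0 < p.1 ∧ 0 < p.2} ⊓ comap Prod.fst atTop ⊓
      comap (fun p : ℝ × ℝ => p.1 / p.2) (nhds c) with hL
  have hc0 : (0 : ℝ) < c := zero_lt_one.trans_le hc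
  have hc1 : (0 : ℝ) < c + 1 := by linarith
  have hα : Tendsto (fun p : ℝ × ℝ => p.1) L atTop :=
    tendsto_comap.mono_left (le_trans inf_le_left inf_le_right)
  have hr : Tendsto (fun p : ℝ × ℝ => p.1 / p.2) L (nhds c) :=
    tendsto_comap.mono_left inf_le_right
  have hpos : ∀ᶠ p : ℝ × ℝ in L, 0 < p.1 ∧ 0 < p.2 :=
    le_principal_iff.mp (le_trans inf_le_left inf_le_left)
  have hinv : Tendsto (fun p : ℝ × ℝ => p.2 / p.1) L (nhds c⁻¹) := by
    have := hr.inv₀ (ne_of_gt hc0)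
    exact this.congr fun p => inv_div _ _
  have h1α : Tendsto (fun p : ℝ × ℝ => p.1⁻¹) L (nhds 0) :=
    tendsto_inv_atTop_zero.comp hα
  -- key factor limit
  have key : ∀ a b : ℝ, Tendsto (fun p : ℝ × ℝ => (p.1 + p.2 + a) / (p.1 + b)) L
      (nhds ((c + 1) / c)) := by
    intro a b
    have hnum : Tendsto (fun p : ℝ × ℝ => 1 + p.2 / p.1 + a * p.1⁻¹) L
        (nhds (1 + c⁻¹ + a * 0)) :=
      (tendsto_const_nhds.add hinv).add (tendsto_const_nhds.mul h1α)
    have hden : Tendsto (fun p : ℝ × ℝ => 1 + b * p.1⁻¹) L (nhds (1 + b * 0)) :=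
      tendsto_const_nhds.add (tendsto_const_nhds.mul h1α)
    have hdiv := hnum.div hden (by norm_num)
    have hval : (1 + c⁻¹ + a * 0) / (1 + b * 0) = (c + 1) / c := by
      field_simp
      ring
    rw [hval] at hdiv
    refine hdiv.congr' ?_
    filter_upwards [hpos] with p hp
    have h1 : p.1 ≠ 0 := ne_of_gt hp.1
    have e1 : 1 + p.2 / p.1 + a * p.1⁻¹ = (p.1 + p.2 + a) / p.1 := by
      field_simp
    have e2 : 1 + b * p.1⁻¹ = (p.1 + b) / p.1 := by
      field_simp
    show (1 + p.2 / p.1 + a * p.1⁻¹) / (1 + b * p.1⁻¹) = _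
    rw [e1, e2, div_div_div_cancel_right₀]
    exact h1
  -- pochhammer ratio limit
  have hrat : ∀ l : ℕ, Tendsto (fun p : ℝ × ℝ =>
      (ascPochhammer ℝ l).eval (n + p.1 + p.2 + 1) / (ascPochhammer ℝ l).eval (p.1 + 1)) L
      (nhds (((c + 1) / c) ^ l)) := by
    intro l
    have hprod : Tendsto (fun p : ℝ × ℝ =>
        ∏ i ∈ Finset.range l, (p.1 + p.2 + (n + 1 + i)) / (p.1 + (1 + i))) L
        (nhds (∏ _i ∈ Finset.range l, (c + 1) / c)) :=
      tendsto_finset_prod _ fun i _ => key _ _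
    rw [Finset.prod_const, Finset.card_range] at hprod
    refine hprod.congr fun p => ?_
    rw [Finset.prod_div_distrib, ascPochhammer_eval_prod, ascPochhammer_eval_prod]
    congr 1
    · exact Finset.prod_congr rfl fun i _ => by push_cast; ring
    · exact Finset.prod_congr rfl fun i _ => by push_cast; ring
  have hQ : ((c + 1) / c) ^ n ≠ 0 := pow_ne_zero _ (ne_of_gt (div_pos hc1 hc0))
  -- prefactor limit
  have hpre : Tendsto (fun p : ℝ × ℝ =>
      2 ^ n * (ascPochhammer ℝ n).eval (p.1 + 1) / (ascPochhammer ℝ n).eval (n + p.1 + p.2 + 1)) L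
      (nhds (2 ^ n * (((c + 1) / c) ^ n)⁻¹)) := by
    have h2 : Tendsto (fun _ : ℝ × ℝ => (2 : ℝ) ^ n) L (nhds ((2 : ℝ) ^ n)) := tendsto_const_nhds
    have := h2.mul ((hrat n).inv₀ hQ)
    refine this.congr fun p => ?_
    rw [inv_div, mul_div_assoc]
  -- sum limit
  have hsum : Tendsto (fun p : ℝ × ℝ => ∑ l ∈ Finset.range (n + 1),
      ((ascPochhammer ℝ l).eval (n + p.1 + p.2 + 1) / (ascPochhammer ℝ l).eval (p.1 + 1)) *
        (n.choose l : ℝ) * ((x - 1) / 2) ^ l) L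
      (nhds (∑ l ∈ Finset.range (n + 1),
        ((c + 1) / c) ^ l * (n.choose l : ℝ) * ((x - 1) / 2) ^ l)) :=
    tendsto_finset_sum _ fun l _ =>
      (((hrat l).mul tendsto_const_nhds).mul tendsto_const_nhds)
  have hmul := hpre.mul hsum
  have hvaleq : 2 ^ n * (((c + 1) / c) ^ n)⁻¹ *
      (∑ l ∈ Finset.range (n + 1),
        ((c + 1) / c) ^ l * (n.choose l : ℝ) * ((x - 1) / 2) ^ l) =
      (x + (c - 1) / (c + 1)) ^ n := by
    have hsum2 : (∑ l ∈ Finset.range (n + 1),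
        ((c + 1) / c) ^ l * (n.choose l : ℝ) * ((x - 1) / 2) ^ l) =
        (((c + 1) / c) * ((x - 1) / 2) + 1) ^ n := by
      rw [add_pow]
      refine Finset.sum_congr rfl fun l _ => ?_
      rw [mul_pow, one_pow]
      ring
    rw [hsum2, ← inv_pow, ← mul_pow, ← mul_pow]
    congr 1
    field_simp
    ring
  rw [hvaleq] at hmul
  exact hmul.congr fun p => by simp only [monicJacobi]
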